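/- Let D=(N∪{s},E) be a multidigraph with a root r ∈ N such that every node other than r has in-degree at least its out-degree (an r-preflow digraph). Then by a sequence of operations, each either deleting an arc entering s or splitting off a pair of arcs (u,s),(s,w) into the arc (u,w), one can obtain an r-preflow multidigraph D'=(N,E') on node set N with λ_{D'}(r,v) = λ_D(r,v) for every v ∈ N. -/

import Mathlib

set_option linter.unusedSectionVars false
/-- There exist `n` pairwise arc-disjoint directed `v`-`t` paths in the multidigraph
with arc multiset `E`. -/
def HasDisjPaths {V : Type*} [DecidableEq V]
    (E : Multiset (V × V)) (v t : V) (n : ℕ) : Prop :=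
  ∃ Ps : List (List V), Ps.length = n ∧
    (∀ P ∈ Ps, P.head? = some v ∧ P.getLast? = some t) ∧
    (Ps.map fun P => ((P.zip P.tail : List (V × V)) : Multiset (V × V))).sum ≤ E

/-- One step at `s`: either delete an arc entering `s`, or split off a pair of arcs
`(u,s), (s,w)` into the arc `(u,w)`. -/
def SplitStep {V : Type*} [DecidableEq V] (s : V) (E E' : Multiset (V × V)) : Prop :=
  (∃ u, (u, s) ∈ E ∧ E' = E.erase (u, s)) ∨
  (∃ u w, (u, s) ∈ E ∧ (s, w) ∈ E ∧
    E' = (u, w) ::ₘ ((E.erase (u, s)).erase (s, w)))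


namespace PFS

variable {V : Type*} [DecidableEq V]

open Multiset

/-- number of arcs entering `T` -/
def din (M : Multiset (V × V)) (T : Finset V) : ℕ :=
  M.countP (fun a => a.1 ∉ T ∧ a.2 ∈ T)

/-- number of arcs leaving `T` -/
def dout (M : Multiset (V × V)) (T : Finset V) : ℕ :=
  M.countP (fun a => a.1 ∈ T ∧ a.2 ∉ T)

def indeg (M : Multiset (V × V)) (v : V) : ℕ := M.countP (fun a => a.2 = v)
def outdeg (M : Multiset (V × V)) (v : V) : ℕ := M.countP (fun a => a.1 = v)

def Eul (M : Multiset (V × V)) : Prop := ∀ v, indeg M v = outdeg M v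

/-- generic pointwise countP inequality -/
lemma countP_pointwise_le (p q r s : V × V → Prop) [DecidablePred p] [DecidablePred q]
    [DecidablePred r] [DecidablePred s] (M : Multiset (V × V))
    (h : ∀ a ∈ M, (if p a then 1 else 0) + (if q a then 1 else 0) ≤
      (if r a then 1 else 0) + (if s a then 1 else 0)) :
    M.countP p + M.countP q ≤ M.countP r + M.countP s := by
  induction M using Multiset.induction with
  | empty => simp
  | cons a M ih =>
    simp only [countP_cons]
    have h1 := h a (mem_cons_self a M)
    have h2 : M.countP p + M.countP q ≤ M.countP r + M.countP s :=
      ih (fun b hb => h b (mem_cons_of_mem hb))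
    omega

lemma countP_pointwise_le3 (p q t r s : V × V → Prop) [DecidablePred p] [DecidablePred q]
    [DecidablePred t] [DecidablePred r] [DecidablePred s] (M : Multiset (V × V))
    (h : ∀ a ∈ M, (if p a then 1 else 0) + (if q a then 1 else 0) + (if t a then 1 else 0) ≤
      (if r a then 1 else 0) + (if s a then 1 else 0)) :
    M.countP p + M.countP q + M.countP t ≤ M.countP r + M.countP s := by
  induction M using Multiset.induction with
  | empty => simp
  | cons a M ih =>
    simp only [countP_cons]
    have h1 := h a (mem_cons_self a M)
    have h2 := ih (fun b hb => h b (mem_cons_of_mem hb))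
    omega

lemma countP_pointwise_eq (p q r s : V × V → Prop) [DecidablePred p] [DecidablePred q]
    [DecidablePred r] [DecidablePred s] (M : Multiset (V × V))
    (h : ∀ a ∈ M, (if p a then 1 else 0) + (if q a then 1 else 0) =
      (if r a then 1 else 0) + (if s a then 1 else 0)) :
    M.countP p + M.countP q = M.countP r + M.countP s := by
  induction M using Multiset.induction with
  | empty => simp
  | cons a M ih =>
    simp only [countP_cons]
    have h1 := h a (mem_cons_self a M)
    have h2 := ih (fun b hb => h b (mem_cons_of_mem hb))
    omega


lemma countP_fun_insert (M : Multiset (V × V)) (f : V × V → V) (x : V) (T : Finset V)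
    (hx : x ∉ T) :
    M.countP (fun a => f a ∈ insert x T) =
      M.countP (fun a => f a = x) + M.countP (fun a => f a ∈ T) := by
  induction M using Multiset.induction with
  | empty => simp
  | cons a M ih =>
    simp only [countP_cons, Finset.mem_insert] at ih ⊢
    by_cases h1 : f a = x <;> by_cases h2 : f a ∈ T
    · exact absurd (h1 ▸ h2) hx
    all_goals (simp [h1, h2, hx, ih]; try omega)

/-- sum of indegrees over T -/
lemma sum_indeg (M : Multiset (V × V)) (T : Finset V) :
    ∑ x ∈ T, indeg M x = M.countP (fun a => a.2 ∈ T) := by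
  classical
  induction T using Finset.induction with
  | empty => simp [indeg]
  | @insert x T hx ih =>
    rw [Finset.sum_insert hx, ih, countP_fun_insert M Prod.snd x T hx]
    rfl

lemma sum_outdeg (M : Multiset (V × V)) (T : Finset V) :
    ∑ x ∈ T, outdeg M x = M.countP (fun a => a.1 ∈ T) := by
  classical
  induction T using Finset.induction with
  | empty => simp [outdeg]
  | @insert x T hx ih =>
    rw [Finset.sum_insert hx, ih, countP_fun_insert M Prod.fst x T hx]
    rfl

lemma din_add_inside (M : Multiset (V × V)) (T : Finset V) :
    M.countP (fun a => a.2 ∈ T) = din M T + M.countP (fun a => a.1 ∈ T ∧ a.2 ∈ T) := by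
  unfold din
  induction M using Multiset.induction with
  | empty => simp
  | cons a M ih =>
    simp only [countP_cons]
    by_cases h1 : a.1 ∈ T <;> by_cases h2 : a.2 ∈ T <;> simp [h1, h2] <;> omega

lemma dout_add_inside (M : Multiset (V × V)) (T : Finset V) :
    M.countP (fun a => a.1 ∈ T) = dout M T + M.countP (fun a => a.1 ∈ T ∧ a.2 ∈ T) := by
  unfold dout
  induction M using Multiset.induction with
  | empty => simp
  | cons a M ih =>
    simp only [countP_cons]
    by_cases h1 : a.1 ∈ T <;> by_cases h2 : a.2 ∈ T <;> simp [h1, h2] <;> omega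

lemma din_eq_dout {M : Multiset (V × V)} (hE : Eul M) (T : Finset V) :
    din M T = dout M T := by
  have h1 := sum_indeg M T
  have h2 := sum_outdeg M T
  have h3 := din_add_inside M T
  have h4 := dout_add_inside M T
  have h5 : ∑ x ∈ T, indeg M x = ∑ x ∈ T, outdeg M x :=
    Finset.sum_congr rfl (fun x _ => hE x)
  omega



def arcs (P : List V) : Multiset (V × V) := ((P.zip P.tail : List (V × V)) : Multiset (V × V))

lemma arcs_cons₂ (a c : V) (Q : List V) : arcs (a :: c :: Q) = (a, c) ::ₘ arcs (c :: Q) := rfl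

lemma indeg_cons (p : V × V) (M : Multiset (V × V)) (x : V) :
    indeg (p ::ₘ M) x = indeg M x + (if p.2 = x then 1 else 0) := countP_cons _ _ _

lemma outdeg_cons (p : V × V) (M : Multiset (V × V)) (x : V) :
    outdeg (p ::ₘ M) x = outdeg M x + (if p.1 = x then 1 else 0) := countP_cons _ _ _

lemma din_cons (p : V × V) (M : Multiset (V × V)) (T : Finset V) :
    din (p ::ₘ M) T = din M T + (if p.1 ∉ T ∧ p.2 ∈ T then 1 else 0) := countP_cons _ _ _

lemma arcs_balance (P : List V) (b : V) (hb : P.getLast? = some b) (a : V)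
    (ha : P.head? = some a) (x : V) :
    indeg (arcs P) x + (if x = a then 1 else 0) =
      outdeg (arcs P) x + (if x = b then 1 else 0) := by
  induction P generalizing a with
  | nil => simp at ha
  | cons c Q ih =>
    have hac : c = a := by simpa using ha
    subst hac
    cases Q with
    | nil =>
      have hcb : c = b := by simpa using hb
      subst hcb
      simp [arcs, indeg, outdeg]
    | cons d R =>
      have hb' : (d :: R).getLast? = some b := by simpa using hb
      have H := ih hb' d rfl
      rw [arcs_cons₂, indeg_cons, outdeg_cons]
      simp only
      by_cases h1 : x = c <;> by_cases h2 : x = d <;> by_cases h3 : x = b <;>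
        simp [h1, h2, h3, eq_comm] at H ⊢ <;> try omega

lemma exists_crossing (P : List V) (T : Finset V) (a b : V) (ha : P.head? = some a)
    (hb : P.getLast? = some b) (haT : a ∉ T) (hbT : b ∈ T) :
    ∃ p ∈ arcs P, p.1 ∉ T ∧ p.2 ∈ T := by
  induction P generalizing a with
  | nil => simp at ha
  | cons c Q ih =>
    have hac : c = a := by simpa using ha
    subst hac
    cases Q with
    | nil =>
      have hcb : c = b := by simpa using hb
      subst hcb
      exact absurd hbT haT
    | cons d R =>
      have hb' : (d :: R).getLast? = some b := by simpa using hb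
      by_cases hd : d ∈ T
      · exact ⟨(c, d), by rw [arcs_cons₂]; exact mem_cons_self _ _, haT, hd⟩
      · obtain ⟨p, hp, h⟩ := ih (a := d) (ha := rfl) (hb := hb') (haT := hd)
        exact ⟨p, by rw [arcs_cons₂]; exact mem_cons_of_mem hp, h⟩

lemma one_le_din_arcs (P : List V) (T : Finset V) (a b : V) (ha : P.head? = some a)
    (hb : P.getLast? = some b) (haT : a ∉ T) (hbT : b ∈ T) : 1 ≤ din (arcs P) T := by
  obtain ⟨p, hp, h1, h2⟩ := exists_crossing P T a b ha hb haT hbT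
  exact countP_pos.mpr ⟨p, hp, h1, h2⟩

lemma length_le_din_sum (Ps : List (List V)) (T : Finset V) (r v : V)
    (h : ∀ P ∈ Ps, P.head? = some r ∧ P.getLast? = some v) (hrT : r ∉ T) (hvT : v ∈ T) :
    Ps.length ≤ din ((Ps.map fun P => arcs P).sum) T := by
  induction Ps with
  | nil => simp
  | cons P Ps ih =>
    have h1 := h P List.mem_cons_self
    have h2 := ih (fun Q hQ => h Q (List.mem_cons_of_mem _ hQ))
    have h3 := one_le_din_arcs P T r v h1.1 h1.2 hrT hvT
    simp only [List.map_cons, List.sum_cons, List.length_cons]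
    unfold din at h2 h3 ⊢
    rw [countP_add]
    omega

lemma din_le_din (M M' : Multiset (V × V)) (h : M ≤ M') (T : Finset V) :
    din M T ≤ din M' T := countP_le_of_le _ h

lemma hasDisjPaths_cut_bound {M : Multiset (V × V)} {r v : V} {n : ℕ}
    (h : HasDisjPaths M r v n) (T : Finset V) (hvT : v ∈ T) (hrT : r ∉ T) :
    n ≤ din M T := by
  obtain ⟨Ps, hlen, hh, hsum⟩ := h
  calc n = Ps.length := hlen.symm
    _ ≤ din ((Ps.map fun P => arcs P).sum) T := length_le_din_sum Ps T r v hh hrT hvT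
    _ ≤ din M T := din_le_din _ _ hsum T

lemma arcs_append_last (P : List V) (x y : V) (h : P.getLast? = some x) :
    arcs (P ++ [y]) = (x, y) ::ₘ arcs P := by
  induction P generalizing x with
  | nil => simp at h
  | cons c Q ih =>
    cases Q with
    | nil =>
      have : c = x := by simpa using h
      subst this
      rfl
    | cons d R =>
      have h' : (d :: R).getLast? = some x := by simpa using h
      show arcs (c :: d :: (R ++ [y])) = (x, y) ::ₘ arcs (c :: d :: R)
      simp only [List.cons_append] at ih
      rw [arcs_cons₂, ih x h', arcs_cons₂, Multiset.cons_swap]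

lemma extract (F : Multiset (V × V)) (r : V) :
    ∀ t, (∀ x, x ≠ r → outdeg F x ≤ indeg F x) → t ≠ r → outdeg F t < indeg F t →
    ∃ P : List V, P.head? = some r ∧ P.getLast? = some t ∧ arcs P ≤ F := by
  induction F using Multiset.strongInductionOn with
  | _ F ih =>
    intro t hpre htr hlt
    have h1 : 0 < F.countP (fun a => a.2 = t) := by
      have : outdeg F t < indeg F t := hlt
      unfold indeg at this; omega
    obtain ⟨a, haF, ha2⟩ := countP_pos.mp h1
    obtain ⟨x, t'⟩ := a
    rw [show t' = t from ha2] at haF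
    clear ha2
    by_cases hxr : x = r
    · refine ⟨[r, t], rfl, rfl, ?_⟩
      have he : arcs [r, t] = {(r, t)} := rfl
      rw [he]
      exact Multiset.singleton_le.mpr (hxr ▸ haF)
    · set F₁ := F.erase (x, t) with hF₁
      have hF : F = (x, t) ::ₘ F₁ := (Multiset.cons_erase haF).symm
      have hin : ∀ y, indeg F y = indeg F₁ y + (if t = y then 1 else 0) := by
        intro y; rw [hF, indeg_cons]
      have hout : ∀ y, outdeg F y = outdeg F₁ y + (if x = y then 1 else 0) := by
        intro y; rw [hF, outdeg_cons]
      have hpre₁ : ∀ y, y ≠ r → outdeg F₁ y ≤ indeg F₁ y := by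
        intro y hy
        have h2 := hpre y hy
        have h3 := hin y; have h4 := hout y
        have h7 := hlt
        by_cases e1 : t = y
        · subst e1
          by_cases e2 : x = t <;> simp [e2] at h3 h4 <;> omega
        · by_cases e2 : x = y <;> simp [e1, e2] at h3 h4 <;> omega
      have hstrict : outdeg F₁ x < indeg F₁ x := by
        have h2 := hpre x hxr
        have h3 := hin x; have h4 := hout x
        have h7 := hlt
        by_cases e1 : t = x
        · subst e1; simp at h3 h4; omega
        · simp [e1] at h3 h4; omega
      obtain ⟨P, hPh, hPl, hPle⟩ :=
        ih F₁ (Multiset.erase_lt.mpr haF) x hpre₁ hxr hstrict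
      refine ⟨P ++ [t], ?_, ?_, ?_⟩
      · obtain ⟨p0, P', rfl⟩ : ∃ p0 P', P = p0 :: P' := by
          cases P with
          | nil => simp at hPh
          | cons p0 P' => exact ⟨p0, P', rfl⟩
        simpa using hPh
      · simp
      · rw [arcs_append_last P x t hPl, hF]
        exact Multiset.cons_le_cons _ hPle

lemma indeg_add (M N : Multiset (V × V)) (x : V) :
    indeg (M + N) x = indeg M x + indeg N x := countP_add _ _ _
lemma outdeg_add (M N : Multiset (V × V)) (x : V) :
    outdeg (M + N) x = outdeg M x + outdeg N x := countP_add _ _ _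
lemma din_add (M N : Multiset (V × V)) (T : Finset V) :
    din (M + N) T = din M T + din N T := countP_add _ _ _

lemma decomp (n : ℕ) :
    ∀ (F : Multiset (V × V)) (r v : V), (∀ x, x ≠ r → outdeg F x ≤ indeg F x) → v ≠ r →
    outdeg F v + n ≤ indeg F v → HasDisjPaths F r v n := by
  induction n with
  | zero => intro F r v _ _ _; exact ⟨[], rfl, by simp, by simp⟩
  | succ n ih =>
    intro F r v hpre hvr hdeg
    obtain ⟨P, hPh, hPl, hPle⟩ := extract F r v hpre hvr (by omega)
    set F₂ := F - arcs P with hF₂def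
    have hF : F₂ + arcs P = F := tsub_add_cancel_of_le hPle
    have hin : ∀ x, indeg F x = indeg F₂ x + indeg (arcs P) x := by
      intro x; rw [← hF, indeg_add]
    have hout : ∀ x, outdeg F x = outdeg F₂ x + outdeg (arcs P) x := by
      intro x; rw [← hF, outdeg_add]
    have hbal := fun x => arcs_balance P v hPl r hPh x
    have hpre₂ : ∀ x, x ≠ r → outdeg F₂ x ≤ indeg F₂ x := by
      intro x hx
      have h2 := hpre x hx
      have h3 := hin x; have h4 := hout x; have h5 := hbal x
      by_cases e2 : x = v
      · subst e2; simp [hx] at h5; omega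
      · simp [e2, hx] at h5; omega
    have hdeg₂ : outdeg F₂ v + n ≤ indeg F₂ v := by
      have h3 := hin v; have h4 := hout v; have h5 := hbal v
      simp [hvr] at h5
      omega
    obtain ⟨Ps, hl, hmem, hsum⟩ := ih F₂ r v hpre₂ hvr hdeg₂
    refine ⟨P :: Ps, by simp [hl], ?_, ?_⟩
    · intro Q hQ
      rcases List.mem_cons.mp hQ with rfl | hQ'
      · exact ⟨hPh, hPl⟩
      · exact hmem Q hQ' 
    · show ((P :: Ps).map fun Q => arcs Q).sum ≤ F
      rw [List.map_cons, List.sum_cons, ← hF, add_comm F₂ (arcs P)]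
      exact add_le_add (le_refl _) hsum


lemma hasDisjPaths_mono_left {M M' : Multiset (V × V)} {r v : V} {n : ℕ}
    (h : HasDisjPaths M r v n) (hle : M ≤ M') : HasDisjPaths M' r v n := by
  obtain ⟨Ps, h1, h2, h3⟩ := h
  exact ⟨Ps, h1, h2, le_trans h3 hle⟩

lemma hasDisjPaths_mono_n {M : Multiset (V × V)} {r v : V} {n j : ℕ}
    (h : HasDisjPaths M r v n) (hj : j ≤ n) : HasDisjPaths M r v j := by
  obtain ⟨Ps, h1, h2, h3⟩ := h
  refine ⟨Ps.take j, by simp [h1, hj], fun P hP => h2 P ((List.take_sublist _ _).mem hP), ?_⟩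
  calc ((Ps.take j).map fun P => ((P.zip P.tail : List (V × V)) : Multiset (V × V))).sum
      ≤ (Ps.map fun P => ((P.zip P.tail : List (V × V)) : Multiset (V × V))).sum := by
        conv_rhs => rw [← List.take_append_drop j Ps]
        rw [List.map_append, List.sum_append]
        exact le_add_right le_rfl
    _ ≤ M := h3

lemma hasDisjPaths_zero (M : Multiset (V × V)) (r v : V) : HasDisjPaths M r v 0 :=
  ⟨[], rfl, by simp, by simp⟩

lemma hasDisjPaths_self (M : Multiset (V × V)) (r : V) (n : ℕ) : HasDisjPaths M r r n := by
  refine ⟨List.replicate n [r], by simp, ?_, ?_⟩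
  · intro P hP
    rw [List.eq_of_mem_replicate hP]
    exact ⟨rfl, rfl⟩
  · calc (List.replicate n [r] |>.map
          fun P => ((P.zip P.tail : List (V × V)) : Multiset (V × V))).sum
        = (List.replicate n (0 : Multiset (V × V))).sum := by
          rw [List.map_replicate]; rfl
      _ ≤ M := by simp

/-- dedup a chain -/
lemma nodup_chain (R : V → V → Prop) :
    ∀ (n : ℕ) (l : List V) (a b : V), l.length ≤ n → List.Chain R a l →
      (a :: l).getLast? = some b →
    ∃ m : List V, m.Nodup ∧ List.Chain' R m ∧ m.head? = some a ∧ m.getLast? = some b ∧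
      ∀ x ∈ m, x = a ∨ x ∈ l := by
  intro n
  induction n with
  | zero =>
    intro l a b hlen hch hlast
    obtain rfl : l = [] := List.length_eq_zero_iff.mp (Nat.le_zero.mp hlen)
    have hab : a = b := by simpa using hlast
    exact ⟨[a], by simp, List.IsChain.singleton a, rfl, by simp [hab], by simp⟩
  | succ n ih =>
    intro l a b hlen hch hlast
    by_cases hal : a ∈ l
    · obtain ⟨l1, l2, rfl⟩ := List.append_of_mem hal
      have hch2 : List.Chain R a l2 := (List.isChain_cons_split.mp hch).2
      have hlast2 : (a :: l2).getLast? = some b := by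
        have e : a :: (l1 ++ a :: l2) = (a :: l1) ++ (a :: l2) := by simp
        rw [e, List.getLast?_append] at hlast
        cases h2 : (a :: l2).getLast? with
        | none => simp at h2
        | some c => rw [h2] at hlast; simpa using hlast
      have hlen2 : l2.length ≤ n := by
        simp only [List.length_append, List.length_cons] at hlen
        omega
      obtain ⟨m, h1, h2, h3, h4, h5⟩ := ih l2 a b hlen2 hch2 hlast2
      exact ⟨m, h1, h2, h3, h4, fun x hx => (h5 x hx).imp id (fun h => by simp [h])⟩
    · cases l with
      | nil =>
        have hab : a = b := by simpa using hlast
        exact ⟨[a], by simp, List.IsChain.singleton a, rfl, by simp [hab], by simp⟩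
      | cons c l' =>
        replace hch := List.isChain_cons_cons.mp hch
        have hlast' : (c :: l').getLast? = some b := by
          rw [← hlast]; exact (List.getLast?_cons_cons).symm
        have hlen' : l'.length ≤ n := by simpa using hlen
        obtain ⟨m, hnd, hch', hh, hl, hsub⟩ := ih l' c b hlen' hch.2 hlast'
        have ham : a ∉ m := by
          intro hx
          rcases hsub a hx with rfl | hx'
          · exact hal List.mem_cons_self
          · exact hal (List.mem_cons_of_mem _ hx')
        refine ⟨a :: m, List.nodup_cons.mpr ⟨ham, hnd⟩, ?_, rfl, ?_, ?_⟩
        · refine List.isChain_cons.mpr ⟨?_, hch'⟩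
          intro y hy
          rw [hh] at hy
          obtain rfl : c = y := by simpa using hy
          exact hch.1
        · cases m with
          | nil => simp at hh
          | cons c' m' => rw [List.getLast?_cons_cons]; exact hl
        · intro x hx
          rcases List.mem_cons.mp hx with rfl | hx'
          · exact Or.inl rfl
          · rcases hsub x hx' with rfl | hx''
            · exact Or.inr List.mem_cons_self
            · exact Or.inr (List.mem_cons_of_mem _ hx'')


def res (M F : Multiset (V × V)) (x y : V) : Prop :=
  F.count (x, y) < M.count (x, y) ∨ 0 < F.count (y, x)

lemma augment (M F₀ : Multiset (V × V)) :
    ∀ (l : List V) (F : Multiset (V × V)), F ≤ M → l.Chain' (res M F₀) → l.Nodup →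
      (∀ x y, x ∈ l → y ∈ l → F.count (x, y) = F₀.count (x, y)) →
      ∀ a b, l.head? = some a → l.getLast? = some b →
      ∃ F' : Multiset (V × V), F' ≤ M ∧
        ∀ x, indeg F' x + outdeg F x + (if x = a then 1 else 0) =
          indeg F x + outdeg F' x + (if x = b then 1 else 0) := by
  intro l
  induction l with
  | nil => intro F _ _ _ _ a b ha _; simp at ha
  | cons c Q ih =>
    intro F hFM hch hnd hcount a b ha hb
    have hca : c = a := by simpa using ha
    subst hca
    cases Q with
    | nil =>
      have hcb : c = b := by simpa using hb
      subst hcb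
      exact ⟨F, hFM, fun x => rfl⟩
    | cons d Rl =>
      replace hch := List.isChain_cons_cons.mp hch
      have hstep := hch.1
      have hbd : (d :: Rl).getLast? = some b := by
        rw [← hb]; exact List.getLast?_cons_cons.symm
      have hcQ : c ∉ (d :: Rl) := (List.nodup_cons.mp hnd).1
      have hndQ := (List.nodup_cons.mp hnd).2
      by_cases hf : F.count (c, d) < M.count (c, d)
      · have hF₁M : ((c, d) ::ₘ F) ≤ M := by
          rw [Multiset.le_iff_count]
          intro p
          rw [Multiset.count_cons]
          by_cases hp : p = (c, d)
          · subst hp; simpa using hf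
          · simpa [hp] using Multiset.count_le_of_le p hFM
        have hcount₁ : ∀ x y, x ∈ (d :: Rl) → y ∈ (d :: Rl) →
            ((c, d) ::ₘ F).count (x, y) = F₀.count (x, y) := by
          intro x y hx hy
          have hne : (x, y) ≠ (c, d) := by
            intro h
            rw [Prod.mk.injEq] at h
            exact hcQ (h.1 ▸ hx)
          rw [Multiset.count_cons_of_ne hne]
          exact hcount x y (List.mem_cons_of_mem _ hx) (List.mem_cons_of_mem _ hy)
        obtain ⟨F', hF'M, H⟩ := ih ((c, d) ::ₘ F) hF₁M hch.2 hndQ hcount₁ d b rfl hbd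
        refine ⟨F', hF'M, ?_⟩
        intro x
        have Hx := H x
        have flip : ∀ (u w : V), (if u = w then (1:ℕ) else 0) = (if w = u then 1 else 0) := by
          intro u w
          by_cases h : u = w
          · simp [h]
          · rw [if_neg h, if_neg (fun hh => h hh.symm)]
        have e1 : indeg ((c, d) ::ₘ F) x = indeg F x + (if x = d then 1 else 0) := by
          rw [indeg_cons, flip]
        have e2 : outdeg ((c, d) ::ₘ F) x = outdeg F x + (if x = c then 1 else 0) := by
          rw [outdeg_cons, flip]
        rw [e1, e2] at Hx
        by_cases g1 : x = c <;> by_cases g2 : x = d <;> by_cases g3 : x = b <;>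
          simp [g1, g2, g3] at Hx ⊢ <;> omega
      · have hback : 0 < F.count (d, c) := by
          rcases hstep with h | h
          · exact absurd (by rw [hcount c d (by simp) (by simp)]; exact h) hf
          · rw [hcount d c (by simp) (by simp)]; exact h
        have hmem : (d, c) ∈ F := Multiset.count_pos.mp hback
        have hFeq : F = (d, c) ::ₘ F.erase (d, c) := (Multiset.cons_erase hmem).symm
        have hF₁M : F.erase (d, c) ≤ M := le_trans (Multiset.erase_le _ _) hFM
        have hcount₁ : ∀ x y, x ∈ (d :: Rl) → y ∈ (d :: Rl) →
            (F.erase (d, c)).count (x, y) = F₀.count (x, y) := by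
          intro x y hx hy
          have hne : (x, y) ≠ (d, c) := by
            intro h
            rw [Prod.mk.injEq] at h
            exact hcQ (h.2 ▸ hy)
          rw [Multiset.count_erase_of_ne hne]
          exact hcount x y (List.mem_cons_of_mem _ hx) (List.mem_cons_of_mem _ hy)
        obtain ⟨F', hF'M, H⟩ := ih (F.erase (d, c)) hF₁M hch.2 hndQ hcount₁ d b rfl hbd
        refine ⟨F', hF'M, ?_⟩
        intro x
        have Hx := H x
        have flip : ∀ (u w : V), (if u = w then (1:ℕ) else 0) = (if w = u then 1 else 0) := by
          intro u w
          by_cases h : u = w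
          · simp [h]
          · rw [if_neg h, if_neg (fun hh => h hh.symm)]
        have e1 : indeg F x = indeg (F.erase (d, c)) x + (if x = c then 1 else 0) := by
          nth_rewrite 1 [hFeq]
          rw [indeg_cons, flip]
        have e2 : outdeg F x = outdeg (F.erase (d, c)) x + (if x = d then 1 else 0) := by
          nth_rewrite 1 [hFeq]
          rw [outdeg_cons, flip]
        by_cases g1 : x = c <;> by_cases g2 : x = d <;> by_cases g3 : x = b <;>
          simp [g1, g2, g3] at Hx e1 e2 ⊢ <;> omega


lemma flow_balance (Ps : List (List V)) (r v : V)
    (h : ∀ P ∈ Ps, P.head? = some r ∧ P.getLast? = some v) (x : V) :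
    indeg ((Ps.map fun P => arcs P).sum) x + (if x = r then Ps.length else 0) =
      outdeg ((Ps.map fun P => arcs P).sum) x + (if x = v then Ps.length else 0) := by
  induction Ps with
  | nil => simp [indeg, outdeg]
  | cons P Ps ih =>
    have h1 := h P List.mem_cons_self
    have h2 := ih (fun Q hQ => h Q (List.mem_cons_of_mem _ hQ))
    have h3 := arcs_balance P v h1.2 r h1.1 x
    simp only [List.map_cons, List.sum_cons, List.length_cons, indeg_add, outdeg_add]
    by_cases g1 : x = r <;> by_cases g2 : x = v
    · have hrv : r = v := g1.symm.trans g2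
      simp [g1, g2, hrv] at h2 h3 ⊢; omega
    · have hrv : ¬ r = v := fun h => g2 (g1.trans h)
      simp [g1, g2, hrv] at h2 h3 ⊢; omega
    · have hrv : ¬ v = r := fun h => g1 (g2.trans h)
      simp [g1, g2, hrv] at h2 h3 ⊢; omega
    · simp [g1, g2] at h2 h3 ⊢; omega

theorem menger (M : Multiset (V × V)) (r v : V) (hvr : v ≠ r) (n : ℕ) :
    HasDisjPaths M r v n ↔ ∀ T : Finset V, v ∈ T → r ∉ T → n ≤ din M T := by
  classical
  constructor
  · exact fun h T h1 h2 => hasDisjPaths_cut_bound h T h1 h2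
  · intro hcut
    by_contra hn
    have hboundP : ∀ k, HasDisjPaths M r v k → k ≤ din M {v} := by
      intro k hk
      exact hasDisjPaths_cut_bound hk {v} (Finset.mem_singleton_self v)
        (Finset.notMem_singleton.mpr (Ne.symm hvr))
    set K := Nat.findGreatest (fun k => HasDisjPaths M r v k) (din M {v}) with hKdef
    have hPK : HasDisjPaths M r v K :=
      Nat.findGreatest_spec (Nat.zero_le _) (hasDisjPaths_zero M r v)
    have hKmax : ¬ HasDisjPaths M r v (K + 1) := by
      intro hk1
      exact Nat.findGreatest_is_greatest (Nat.lt_succ_self K) (hboundP _ hk1) hk1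
    have hKn : K < n := by
      by_contra hge
      exact hn (hasDisjPaths_mono_n hPK (by omega))
    obtain ⟨Ps, hlen, hmem, hsum⟩ := hPK
    set F := (Ps.map fun P => arcs P).sum with hFdef
    have hFM : F ≤ M := hsum
    have hbal : ∀ x, indeg F x + (if x = r then K else 0) =
        outdeg F x + (if x = v then K else 0) := by
      intro x
      have h1 := flow_balance Ps r v hmem x
      rwa [hlen] at h1
    by_cases hreach : Relation.ReflTransGen (res M F) r v
    · obtain ⟨l, hchain, hlast⟩ := List.exists_isChain_cons_of_relationReflTransGen hreach
      have hlastq : (r :: l).getLast? = some v := by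
        rw [List.getLast?_eq_getLast (by simp)]
        exact congrArg some hlast
      obtain ⟨m, hnd, hch', hh, hl, -⟩ :=
        nodup_chain (res M F) l.length l r v le_rfl hchain hlastq
      obtain ⟨F', hF'M, H⟩ := augment M F m F hFM hch' hnd (fun _ _ _ _ => rfl) r v hh hl
      apply hKmax
      apply hasDisjPaths_mono_left _ hF'M
      apply decomp (K + 1) F' r v ?_ hvr ?_
      · intro x hx
        have h1 := H x
        have h2 := hbal x
        by_cases g2 : x = v
        · subst g2
          simp [hx] at h1 h2
          omega
        · simp [hx, g2] at h1 h2
          omega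
      · have h1 := H v
        have h2 := hbal v
        simp [hvr] at h1 h2
        omega
    · set G : Finset V := (M.toFinset.image Prod.fst ∪ M.toFinset.image Prod.snd) ∪ {v, r}
        with hGdef
      have hGmem : ∀ a ∈ M, a.1 ∈ G ∧ a.2 ∈ G := by
        intro a ha
        constructor
        · exact Finset.mem_union_left _ (Finset.mem_union_left _
            (Finset.mem_image.mpr ⟨a, Multiset.mem_toFinset.mpr ha, rfl⟩))
        · exact Finset.mem_union_left _ (Finset.mem_union_right _
            (Finset.mem_image.mpr ⟨a, Multiset.mem_toFinset.mpr ha, rfl⟩))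
      set T : Finset V := G.filter (fun x => ¬ Relation.ReflTransGen (res M F) r x) with hTdef
      have hvT : v ∈ T :=
        Finset.mem_filter.mpr ⟨Finset.mem_union_right _ (by simp), hreach⟩
      have hrT : r ∉ T := fun h => (Finset.mem_filter.mp h).2 Relation.ReflTransGen.refl
      have hdinMF : din (M - F) T = 0 := by
        rw [din, Multiset.countP_eq_zero]
        rintro ⟨x, y⟩ hxy ⟨hx1, hy2⟩
        have hxyM : (x, y) ∈ M := Multiset.mem_of_le tsub_le_self hxy
        have hcount : F.count (x, y) < M.count (x, y) := by
          have hpos := Multiset.count_pos.mpr hxy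
          rw [Multiset.count_sub] at hpos
          omega
        have hreachx : Relation.ReflTransGen (res M F) r x := by
          by_contra hc
          exact hx1 (Finset.mem_filter.mpr ⟨(hGmem _ hxyM).1, hc⟩)
        exact (Finset.mem_filter.mp hy2).2 (hreachx.tail (Or.inl hcount))
      have hdoutF : dout F T = 0 := by
        rw [dout, Multiset.countP_eq_zero]
        rintro ⟨y, x⟩ hyx ⟨hy1, hx2⟩
        have hyxM : (y, x) ∈ M := Multiset.mem_of_le hFM hyx
        have hreachx : Relation.ReflTransGen (res M F) r x := by
          by_contra hc
          exact hx2 (Finset.mem_filter.mpr ⟨(hGmem _ hyxM).2, hc⟩)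
        exact (Finset.mem_filter.mp hy1).2
          (hreachx.tail (Or.inr (Multiset.count_pos.mpr hyx)))
      have hsum_in : ∑ x ∈ T, indeg F x = ∑ x ∈ T, outdeg F x + K := by
        have e : ∑ x ∈ T, (indeg F x + (if x = r then K else 0)) =
            ∑ x ∈ T, (outdeg F x + (if x = v then K else 0)) :=
          Finset.sum_congr rfl (fun x _ => hbal x)
        rw [Finset.sum_add_distrib, Finset.sum_add_distrib, Finset.sum_ite_eq',
          Finset.sum_ite_eq'] at e
        simp [hvT, hrT] at e
        omega
      have h3 := din_add_inside F T
      have h4 := dout_add_inside F T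
      have h5 := sum_indeg F T
      have h6 := sum_outdeg F T
      have hdinF : din F T = K := by omega
      have hdin : din M T = K := by
        have heq : (M - F) + F = M := tsub_add_cancel_of_le hFM
        have := din_add (M - F) F T
        rw [heq] at this
        omega
      have := hcut T hvT hrT
      omega


noncomputable def lam (M : Multiset (V × V)) (r v : V) : ℕ :=
  sInf {k | ∃ T : Finset V, v ∈ T ∧ r ∉ T ∧ din M T = k}

lemma lam_le {M : Multiset (V × V)} {r v : V} {T : Finset V} (hv : v ∈ T) (hr : r ∉ T) :
    lam M r v ≤ din M T :=
  Nat.sInf_le ⟨T, hv, hr, rfl⟩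

lemma lam_spec (M : Multiset (V × V)) {r v : V} (hvr : v ≠ r) :
    ∃ T : Finset V, v ∈ T ∧ r ∉ T ∧ din M T = lam M r v := by
  have hne : {k | ∃ T : Finset V, v ∈ T ∧ r ∉ T ∧ din M T = k}.Nonempty :=
    ⟨din M {v}, {v}, Finset.mem_singleton_self v, Finset.notMem_singleton.mpr (Ne.symm hvr), rfl⟩
  exact Nat.sInf_mem hne

lemma menger_lam (M : Multiset (V × V)) (r v : V) (hvr : v ≠ r) (n : ℕ) :
    HasDisjPaths M r v n ↔ n ≤ lam M r v := by
  rw [menger M r v hvr n]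
  constructor
  · intro h
    obtain ⟨T, h1, h2, h3⟩ := lam_spec M hvr
    rw [← h3]
    exact h T h1 h2
  · intro h T h1 h2
    exact le_trans h (lam_le h1 h2)

lemma din_submod (M : Multiset (V × V)) (C C' : Finset V) :
    din M (C ∪ C') + din M (C ∩ C') ≤ din M C + din M C' := by
  unfold din
  apply countP_pointwise_le
  intro a _
  by_cases h1 : a.1 ∈ C <;> by_cases h2 : a.1 ∈ C' <;> by_cases h3 : a.2 ∈ C <;>
    by_cases h4 : a.2 ∈ C' <;>
    simp [h1, h2, h3, h4, Finset.mem_union, Finset.mem_inter]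

lemma din_positmod {M : Multiset (V × V)} (hE : Eul M) (C C' : Finset V) :
    din M (C \ C') + din M (C' \ C) +
      M.countP (fun a => (a.1 ∈ C ∧ a.1 ∈ C') ∧ (a.2 ∉ C ∧ a.2 ∉ C')) ≤
      din M C + din M C' := by
  rw [din_eq_dout hE C', din_eq_dout hE (C' \ C)]
  unfold din dout
  apply countP_pointwise_le3
  intro a _
  by_cases h1 : a.1 ∈ C <;> by_cases h2 : a.1 ∈ C' <;> by_cases h3 : a.2 ∈ C <;>
    by_cases h4 : a.2 ∈ C' <;>
    simp [h1, h2, h3, h4, Finset.mem_sdiff]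

def sep (r : V) (X : Finset V) (v : V) : Prop := (v ∈ X ∧ r ∉ X) ∨ (v ∉ X ∧ r ∈ X)

lemma sep_bound {M : Multiset (V × V)} (hE : Eul M) {G X : Finset V} (hXG : X ⊆ G)
    (hG : ∀ a ∈ M, a.1 ∈ G ∧ a.2 ∈ G) {r v : V} (hsep : sep r X v) :
    lam M r v ≤ din M X := by
  rcases hsep with ⟨h1, h2⟩ | ⟨h1, h2⟩
  · exact lam_le h1 h2
  · have hvY : v ∈ insert v G \ X := Finset.mem_sdiff.mpr ⟨Finset.mem_insert_self v G, h1⟩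
    have hrY : r ∉ insert v G \ X := fun h => (Finset.mem_sdiff.mp h).2 h2
    have hYX : din M (insert v G \ X) = dout M X := by
      unfold din dout
      apply Multiset.countP_congr rfl
      intro a ha
      have hG1 := (hG a ha).1
      have hG2 := (hG a ha).2
      apply propext
      constructor
      · rintro ⟨ha1, ha2⟩
        refine ⟨?_, (Finset.mem_sdiff.mp ha2).2⟩
        by_contra hc
        exact ha1 (Finset.mem_sdiff.mpr ⟨Finset.mem_insert_of_mem hG1, hc⟩)
      · rintro ⟨ha1, ha2⟩
        exact ⟨fun h => (Finset.mem_sdiff.mp h).2 ha1,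
          Finset.mem_sdiff.mpr ⟨Finset.mem_insert_of_mem hG2, ha2⟩⟩
    calc lam M r v ≤ din M (insert v G \ X) := lam_le hvY hrY
      _ = dout M X := hYX
      _ = din M X := (din_eq_dout hE X).symm


lemma union_tight {M : Multiset (V × V)} (hE : Eul M) {G : Finset V}
    (hG : ∀ a ∈ M, a.1 ∈ G ∧ a.2 ∈ G) {r s u0 : V}
    (harc : (u0, s) ∈ M)
    {C C' : Finset V} (hCG : C ⊆ G) (hC'G : C' ⊆ G)
    (hsC : s ∉ C) (hsC' : s ∉ C') (huC : u0 ∈ C) (huC' : u0 ∈ C')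
    {v v' : V} (hv : sep r C v) (hv' : sep r C' v')
    (htC : din M C = lam M r v) (htC' : din M C' = lam M r v') :
    ∃ x, (x = v ∨ x = v') ∧ sep r (C ∪ C') x ∧ din M (C ∪ C') = lam M r x := by
  have hsub := din_submod M C C'
  have hmid : 0 < M.countP (fun a => (a.1 ∈ C ∧ a.1 ∈ C') ∧ (a.2 ∉ C ∧ a.2 ∉ C')) :=
    countP_pos.mpr ⟨(u0, s), harc, ⟨huC, huC'⟩, ⟨hsC, hsC'⟩⟩
  have hpos := din_positmod hE C C'
  have hstrict : din M (C \ C') + din M (C' \ C) < din M C + din M C' := by omega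
  have hUG : C ∪ C' ⊆ G := Finset.union_subset hCG hC'G
  rcases hv with ⟨hv1, hv2⟩ | ⟨hv1, hv2⟩ <;> rcases hv' with ⟨hv'1, hv'2⟩ | ⟨hv'1, hv'2⟩
  · -- I : v ∈ C, r ∉ C ; v' ∈ C', r ∉ C'
    have hrU : r ∉ C ∪ C' := fun h => (Finset.mem_union.mp h).elim hv2 hv'2
    by_cases hA : v' ∈ C
    · have hin : lam M r v' ≤ din M (C ∩ C') :=
        lam_le (Finset.mem_inter.mpr ⟨hA, hv'1⟩) (fun h => hv2 (Finset.mem_inter.mp h).1)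
      have hsepU : sep r (C ∪ C') v := Or.inl ⟨Finset.mem_union_left _ hv1, hrU⟩
      have hle : lam M r v ≤ din M (C ∪ C') := lam_le (Finset.mem_union_left _ hv1) hrU
      exact ⟨v, Or.inl rfl, hsepU, by omega⟩
    · by_cases hB : v ∈ C'
      · have hin : lam M r v ≤ din M (C ∩ C') :=
          lam_le (Finset.mem_inter.mpr ⟨hv1, hB⟩) (fun h => hv2 (Finset.mem_inter.mp h).1)
        have hsepU : sep r (C ∪ C') v' := Or.inl ⟨Finset.mem_union_right _ hv'1, hrU⟩
        have hle : lam M r v' ≤ din M (C ∪ C') := lam_le (Finset.mem_union_right _ hv'1) hrU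
        exact ⟨v', Or.inr rfl, hsepU, by omega⟩
      · have h1 : lam M r v ≤ din M (C \ C') :=
          lam_le (Finset.mem_sdiff.mpr ⟨hv1, hB⟩) (fun h => hv2 (Finset.mem_sdiff.mp h).1)
        have h2 : lam M r v' ≤ din M (C' \ C) :=
          lam_le (Finset.mem_sdiff.mpr ⟨hv'1, hA⟩) (fun h => hv'2 (Finset.mem_sdiff.mp h).1)
        exfalso; omega
  · -- III : v ∈ C, r ∉ C ; v' ∉ C', r ∈ C'
    by_cases hA : v ∈ C'
    · have hin : lam M r v ≤ din M (C ∩ C') :=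
        lam_le (Finset.mem_inter.mpr ⟨hv1, hA⟩) (fun h => hv2 (Finset.mem_inter.mp h).1)
      by_cases hB : v' ∈ C
      · have h1 : lam M r v' ≤ din M (C \ C') :=
          lam_le (Finset.mem_sdiff.mpr ⟨hB, hv'1⟩) (fun h => hv2 (Finset.mem_sdiff.mp h).1)
        have h2 : lam M r v ≤ din M (C' \ C) :=
          sep_bound hE (Finset.sdiff_subset.trans hC'G) hG
            (Or.inr ⟨fun h => (Finset.mem_sdiff.mp h).2 hv1,
              Finset.mem_sdiff.mpr ⟨hv'2, hv2⟩⟩)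
        exfalso; omega
      · have hsepU : sep r (C ∪ C') v' :=
          Or.inr ⟨fun h => (Finset.mem_union.mp h).elim hB hv'1, Finset.mem_union_right _ hv'2⟩
        have hle : lam M r v' ≤ din M (C ∪ C') := sep_bound hE hUG hG hsepU
        exact ⟨v', Or.inr rfl, hsepU, by omega⟩
    · have h1 : lam M r v ≤ din M (C \ C') :=
        lam_le (Finset.mem_sdiff.mpr ⟨hv1, hA⟩) (fun h => hv2 (Finset.mem_sdiff.mp h).1)
      by_cases hB : v' ∈ C
      · have h2 : lam M r v' ≤ din M (C \ C') :=
          lam_le (Finset.mem_sdiff.mpr ⟨hB, hv'1⟩) (fun h => hv2 (Finset.mem_sdiff.mp h).1)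
        have h3 : lam M r v ≤ din M (C' \ C) :=
          sep_bound hE (Finset.sdiff_subset.trans hC'G) hG
            (Or.inr ⟨fun h => (Finset.mem_sdiff.mp h).2 hv1,
              Finset.mem_sdiff.mpr ⟨hv'2, hv2⟩⟩)
        exfalso; omega
      · have h2 : lam M r v' ≤ din M (C' \ C) :=
          sep_bound hE (Finset.sdiff_subset.trans hC'G) hG
            (Or.inr ⟨fun h => hv'1 (Finset.mem_sdiff.mp h).1,
              Finset.mem_sdiff.mpr ⟨hv'2, hv2⟩⟩)
        exfalso; omega
  · -- IV : v ∉ C, r ∈ C ; v' ∈ C', r ∉ C'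
    by_cases hA : v' ∈ C
    · have hin : lam M r v' ≤ din M (C ∩ C') :=
        lam_le (Finset.mem_inter.mpr ⟨hA, hv'1⟩) (fun h => hv'2 (Finset.mem_inter.mp h).2)
      by_cases hB : v ∈ C'
      · have h1 : lam M r v ≤ din M (C' \ C) :=
          lam_le (Finset.mem_sdiff.mpr ⟨hB, hv1⟩) (fun h => hv'2 (Finset.mem_sdiff.mp h).1)
        have h2 : lam M r v' ≤ din M (C \ C') :=
          sep_bound hE (Finset.sdiff_subset.trans hCG) hG
            (Or.inr ⟨fun h => (Finset.mem_sdiff.mp h).2 hv'1,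
              Finset.mem_sdiff.mpr ⟨hv2, hv'2⟩⟩)
        exfalso; omega
      · have hsepU : sep r (C ∪ C') v :=
          Or.inr ⟨fun h => (Finset.mem_union.mp h).elim hv1 hB, Finset.mem_union_left _ hv2⟩
        have hle : lam M r v ≤ din M (C ∪ C') := sep_bound hE hUG hG hsepU
        exact ⟨v, Or.inl rfl, hsepU, by omega⟩
    · have h1 : lam M r v' ≤ din M (C' \ C) :=
        lam_le (Finset.mem_sdiff.mpr ⟨hv'1, hA⟩) (fun h => hv'2 (Finset.mem_sdiff.mp h).1)
      by_cases hB : v ∈ C'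
      · have h2 : lam M r v ≤ din M (C' \ C) :=
          lam_le (Finset.mem_sdiff.mpr ⟨hB, hv1⟩) (fun h => hv'2 (Finset.mem_sdiff.mp h).1)
        have h3 : lam M r v' ≤ din M (C \ C') :=
          sep_bound hE (Finset.sdiff_subset.trans hCG) hG
            (Or.inr ⟨fun h => (Finset.mem_sdiff.mp h).2 hv'1,
              Finset.mem_sdiff.mpr ⟨hv2, hv'2⟩⟩)
        exfalso; omega
      · have h2 : lam M r v ≤ din M (C \ C') :=
          sep_bound hE (Finset.sdiff_subset.trans hCG) hG
            (Or.inr ⟨fun h => hv1 (Finset.mem_sdiff.mp h).1,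
              Finset.mem_sdiff.mpr ⟨hv2, hv'2⟩⟩)
        exfalso; omega
  · -- II : v ∉ C, r ∈ C ; v' ∉ C', r ∈ C'
    have hin : lam M r v ≤ din M (C ∩ C') :=
      sep_bound hE (Finset.inter_subset_left.trans hCG) hG
        (Or.inr ⟨fun h => hv1 (Finset.mem_inter.mp h).1,
          Finset.mem_inter.mpr ⟨hv2, hv'2⟩⟩)
    have hin' : lam M r v' ≤ din M (C ∩ C') :=
      sep_bound hE (Finset.inter_subset_left.trans hCG) hG
        (Or.inr ⟨fun h => hv'1 (Finset.mem_inter.mp h).2,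
          Finset.mem_inter.mpr ⟨hv2, hv'2⟩⟩)
    by_cases hA : v ∈ C'
    · by_cases hB : v' ∈ C
      · have h1 : lam M r v' ≤ din M (C \ C') :=
          lam_le (Finset.mem_sdiff.mpr ⟨hB, hv'1⟩) (fun h => (Finset.mem_sdiff.mp h).2 hv'2)
        have h2 : lam M r v ≤ din M (C' \ C) :=
          lam_le (Finset.mem_sdiff.mpr ⟨hA, hv1⟩) (fun h => (Finset.mem_sdiff.mp h).2 hv2)
        exfalso; omega
      · have hsepU : sep r (C ∪ C') v' :=
          Or.inr ⟨fun h => (Finset.mem_union.mp h).elim hB hv'1, Finset.mem_union_left _ hv2⟩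
        have hle : lam M r v' ≤ din M (C ∪ C') := sep_bound hE hUG hG hsepU
        exact ⟨v', Or.inr rfl, hsepU, by omega⟩
    · have hsepU : sep r (C ∪ C') v :=
        Or.inr ⟨fun h => (Finset.mem_union.mp h).elim hv1 hA, Finset.mem_union_left _ hv2⟩
      have hle : lam M r v ≤ din M (C ∪ C') := sep_bound hE hUG hG hsepU
      exact ⟨v, Or.inl rfl, hsepU, by omega⟩


lemma exists_good_split (M : Multiset (V × V)) (hE : Eul M) (r s u0 : V)
    (hrs : r ≠ s) (hu0 : u0 ≠ s) (harc : (u0, s) ∈ M) (hnl : (s, s) ∉ M) :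
    ∃ w, (s, w) ∈ M ∧ ∀ v, v ≠ s →
      ∀ T : Finset V, v ∈ T → r ∉ T →
        lam M r v ≤ din ((u0, w) ::ₘ (M.erase (u0, s)).erase (s, w)) T := by
  classical
  by_contra hcon
  push_neg at hcon
  set G := (M.toFinset.image Prod.fst ∪ M.toFinset.image Prod.snd) ∪ {r, s, u0} with hGdef
  have hG : ∀ a ∈ M, a.1 ∈ G ∧ a.2 ∈ G := by
    intro a ha
    constructor
    · exact Finset.mem_union_left _ (Finset.mem_union_left _
        (Finset.mem_image.mpr ⟨a, Multiset.mem_toFinset.mpr ha, rfl⟩))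
    · exact Finset.mem_union_left _ (Finset.mem_union_right _
        (Finset.mem_image.mpr ⟨a, Multiset.mem_toFinset.mpr ha, rfl⟩))
  have hrG : r ∈ G := Finset.mem_union_right _ (by simp)
  have hsG : s ∈ G := Finset.mem_union_right _ (by simp)
  have huG : u0 ∈ G := Finset.mem_union_right _ (by simp)
  have hblock : ∀ w, (s, w) ∈ M → ∃ C : Finset V, C ⊆ G ∧ s ∉ C ∧ u0 ∈ C ∧ w ∈ C ∧
      ∃ x, x ≠ s ∧ sep r C x ∧ din M C = lam M r x := by
    intro w hw
    obtain ⟨v, hvs, T, hvT, hrT, hlt⟩ := hcon w hw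
    have hws : w ≠ s := fun h => hnl (h ▸ hw)
    have hne2 : ((s, w) : V × V) ≠ (u0, s) := by
      intro h; rw [Prod.mk.injEq] at h; exact hu0 h.1.symm
    have hswE : (s, w) ∈ M.erase (u0, s) := (Multiset.mem_erase_of_ne hne2).mpr hw
    have hMeq : M = (u0, s) ::ₘ (s, w) ::ₘ (M.erase (u0, s)).erase (s, w) := by
      rw [Multiset.cons_erase hswE, Multiset.cons_erase harc]
    have e1 : din M T = din ((M.erase (u0, s)).erase (s, w)) T +
        ((if u0 ∉ T ∧ s ∈ T then 1 else 0) + (if s ∉ T ∧ w ∈ T then 1 else 0)) := by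
      nth_rewrite 1 [hMeq]
      rw [din_cons, din_cons]
      simp only [Prod.fst, Prod.snd]
      omega
    have e2 : din ((u0, w) ::ₘ (M.erase (u0, s)).erase (s, w)) T =
        din ((M.erase (u0, s)).erase (s, w)) T + (if u0 ∉ T ∧ w ∈ T then 1 else 0) := by
      rw [din_cons]
    have hTle : lam M r v ≤ din M T := lam_le hvT hrT
    have hvr : v ≠ r := fun h => hrT (h ▸ hvT)
    have hvG : v ∈ G := by
      by_contra hvg
      have hz : din M {v} = 0 := by
        rw [din, Multiset.countP_eq_zero]
        rintro a ha ⟨_, ha2⟩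
        exact hvg ((Finset.mem_singleton.mp ha2) ▸ (hG a ha).2)
      have hlam0 : lam M r v = 0 := Nat.le_zero.mp (le_trans
        (lam_le (Finset.mem_singleton_self v) (Finset.notMem_singleton.mpr (Ne.symm hvr)))
        (le_of_eq hz))
      omega
    by_cases hsT : s ∈ T
    · by_cases hu : u0 ∈ T
      · exfalso; simp [hsT, hu] at e1 e2; omega
      · by_cases hw' : w ∈ T
        · exfalso; simp [hsT, hu, hw'] at e1 e2; omega
        · -- pattern A
          simp [hsT, hu, hw'] at e1 e2
          refine ⟨G \ T, Finset.sdiff_subset, fun h => (Finset.mem_sdiff.mp h).2 hsT,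
            Finset.mem_sdiff.mpr ⟨huG, hu⟩, Finset.mem_sdiff.mpr ⟨(hG _ hw).2, hw'⟩,
            v, hvs, Or.inr ⟨fun h => (Finset.mem_sdiff.mp h).2 hvT,
              Finset.mem_sdiff.mpr ⟨hrG, hrT⟩⟩, ?_⟩
          have hGT : din M (G \ T) = dout M T := by
            unfold din dout
            apply Multiset.countP_congr rfl
            intro a ha
            apply propext
            have g1 := (hG a ha).1
            have g2 := (hG a ha).2
            constructor
            · rintro ⟨ha1, ha2⟩
              exact ⟨by by_contra hc; exact ha1 (Finset.mem_sdiff.mpr ⟨g1, hc⟩),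
                (Finset.mem_sdiff.mp ha2).2⟩
            · rintro ⟨ha1, ha2⟩
              exact ⟨fun h => (Finset.mem_sdiff.mp h).2 ha1,
                Finset.mem_sdiff.mpr ⟨g2, ha2⟩⟩
          rw [hGT, ← din_eq_dout hE T]
          omega
    · by_cases hu : u0 ∈ T
      · by_cases hw' : w ∈ T
        · -- pattern B
          simp [hsT, hu, hw'] at e1 e2
          refine ⟨T ∩ G, Finset.inter_subset_right, fun h => hsT (Finset.mem_inter.mp h).1,
            Finset.mem_inter.mpr ⟨hu, huG⟩, Finset.mem_inter.mpr ⟨hw', (hG _ hw).2⟩,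
            v, hvs, Or.inl ⟨Finset.mem_inter.mpr ⟨hvT, hvG⟩,
              fun h => hrT (Finset.mem_inter.mp h).1⟩, ?_⟩
          have hTG : din M (T ∩ G) = din M T := by
            unfold din
            apply Multiset.countP_congr rfl
            intro a ha
            apply propext
            have g1 := (hG a ha).1
            have g2 := (hG a ha).2
            constructor
            · rintro ⟨ha1, ha2⟩
              exact ⟨fun h => ha1 (Finset.mem_inter.mpr ⟨h, g1⟩), (Finset.mem_inter.mp ha2).1⟩
            · rintro ⟨ha1, ha2⟩
              exact ⟨fun h => ha1 (Finset.mem_inter.mp h).1, Finset.mem_inter.mpr ⟨ha2, g2⟩⟩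
          rw [hTG]
          omega
        · exfalso; simp [hsT, hu, hw'] at e1 e2; omega
      · by_cases hw' : w ∈ T
        · exfalso; simp [hsT, hu, hw'] at e1 e2; omega
        · exfalso; simp [hsT, hu, hw'] at e1 e2; omega
  -- fold blockers over all out-neighbours
  have hfold : ∀ (W' : Finset V), (∀ w ∈ W', (s, w) ∈ M) → W'.Nonempty →
      ∃ C : Finset V, C ⊆ G ∧ s ∉ C ∧ u0 ∈ C ∧ (∀ w ∈ W', w ∈ C) ∧
        ∃ x, x ≠ s ∧ sep r C x ∧ din M C = lam M r x := by
    intro W'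
    induction W' using Finset.induction with
    | empty => intro _ h; exact absurd h Finset.not_nonempty_empty
    | @insert w W' hwW ih =>
      intro hmem _
      obtain ⟨C1, p1, p2, p3, p4, x1, q1, q2, q3⟩ :=
        hblock w (hmem w (Finset.mem_insert_self _ _))
      by_cases hW'ne : W'.Nonempty
      · obtain ⟨C2, r1, r2, r3, r4, x2, s1, s2, s3⟩ :=
          ih (fun u hu => hmem u (Finset.mem_insert_of_mem hu)) hW'ne
        obtain ⟨x, hx12, hsepU, htU⟩ :=
          union_tight hE hG harc p1 r1 p2 r2 p3 r3 q2 s2 q3 s3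
        refine ⟨C1 ∪ C2, Finset.union_subset p1 r1,
          fun h => (Finset.mem_union.mp h).elim p2 r2, Finset.mem_union_left _ p3, ?_,
          x, ?_, hsepU, htU⟩
        · intro u hu
          rcases Finset.mem_insert.mp hu with rfl | hu'
          · exact Finset.mem_union_left _ p4
          · exact Finset.mem_union_right _ (r4 u hu')
        · rcases hx12 with rfl | rfl
          exacts [q1, s1]
      · have hW'e : W' = ∅ := Finset.not_nonempty_iff_eq_empty.mp hW'ne
        subst hW'e
        refine ⟨C1, p1, p2, p3, ?_, x1, q1, q2, q3⟩
        intro u hu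
        rcases Finset.mem_insert.mp hu with rfl | hu'
        · exact p4
        · simp at hu'
  have houtpos : 0 < M.countP (fun a => a.1 = s) := by
    have h1 : 0 < M.countP (fun a => a.2 = s) := countP_pos.mpr ⟨(u0, s), harc, rfl⟩
    have h2 := hE s
    unfold indeg outdeg at h2
    omega
  set W : Finset V := (M.filter (fun a => a.1 = s)).toFinset.image Prod.snd with hWdef
  have hWmem : ∀ w ∈ W, (s, w) ∈ M := by
    intro w hw
    obtain ⟨a, ha, rfl⟩ := Finset.mem_image.mp hw
    have := Multiset.mem_toFinset.mp ha
    rw [Multiset.mem_filter] at this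
    have heta : (s, a.2) = a := by
      rw [← this.2]
    exact heta ▸ this.1
  have hWcov : ∀ w, (s, w) ∈ M → w ∈ W := by
    intro w hw
    exact Finset.mem_image.mpr ⟨(s, w), Multiset.mem_toFinset.mpr
      (Multiset.mem_filter.mpr ⟨hw, rfl⟩), rfl⟩
  have hWne : W.Nonempty := by
    obtain ⟨a, ha, ha1⟩ := countP_pos.mp houtpos
    have heta : (s, a.2) = a := by rw [← ha1]
    exact ⟨a.2, hWcov a.2 (heta ▸ ha)⟩
  obtain ⟨C, hCG, hsC, huC, hallw, x, hxs, hsepx, htx⟩ := hfold W hWmem hWne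
  -- final contradiction with insert s C
  have hkey : din M (insert s C) + M.countP (fun a => a.1 = s ∧ a.2 ∈ C) =
      din M C + M.countP (fun a => a.2 = s ∧ a.1 ∉ insert s C) := by
    unfold din
    apply countP_pointwise_eq
    intro a _
    by_cases e2 : a.1 = s
    · have e3 : a.1 ∉ C := fun h => hsC (e2 ▸ h)
      by_cases e1 : a.2 = s
      · have e4 : a.2 ∉ C := fun h => hsC (e1 ▸ h)
        simp [e1, e2, e3, e4, hsC, Finset.mem_insert]
      · by_cases e4 : a.2 ∈ C <;> simp [e1, e2, e3, e4, hsC, Finset.mem_insert]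
    · by_cases e1 : a.2 = s
      · have e4 : a.2 ∉ C := fun h => hsC (e1 ▸ h)
        by_cases e3 : a.1 ∈ C <;> simp [e1, e2, e3, e4, hsC, Finset.mem_insert]
      · by_cases e3 : a.1 ∈ C <;> by_cases e4 : a.2 ∈ C <;>
          simp [e1, e2, e3, e4, hsC, Finset.mem_insert]
  have hout_all : M.countP (fun a => a.1 = s ∧ a.2 ∈ C) = M.countP (fun a => a.1 = s) := by
    apply Multiset.countP_congr rfl
    intro a ha
    apply propext
    constructor
    · exact fun h => h.1
    · intro h
      refine ⟨h, ?_⟩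
      have heta : (s, a.2) = a := by rw [← h]
      exact hallw a.2 (hWcov a.2 (heta ▸ ha))
  have hin_split : M.countP (fun a => a.2 = s ∧ a.1 ∉ insert s C) +
      M.countP (fun a => a.2 = s ∧ a.1 ∈ insert s C) = M.countP (fun a => a.2 = s) := by
    have := countP_pointwise_eq (fun a => a.2 = s ∧ a.1 ∉ insert s C)
      (fun a => a.2 = s ∧ a.1 ∈ insert s C) (fun a => a.2 = s) (fun _ => False) M ?_
    · simpa using this
    · intro a _
      by_cases e1 : a.2 = s <;> by_cases e2 : a.1 ∈ insert s C <;> simp [e1, e2]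
  have hin_pos : 0 < M.countP (fun a => a.2 = s ∧ a.1 ∈ insert s C) :=
    countP_pos.mpr ⟨(u0, s), harc, rfl, Finset.mem_insert_of_mem huC⟩
  have hbalS := hE s
  unfold indeg outdeg at hbalS
  have hdlt : din M (insert s C) < din M C := by omega
  have hsepx' : sep r (insert s C) x := by
    rcases hsepx with ⟨a1, a2⟩ | ⟨a1, a2⟩
    · exact Or.inl ⟨Finset.mem_insert_of_mem a1,
        fun h => (Finset.mem_insert.mp h).elim hrs a2⟩
    · exact Or.inr ⟨fun h => (Finset.mem_insert.mp h).elim hxs a1,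
        Finset.mem_insert_of_mem a2⟩
  have hxle : lam M r x ≤ din M (insert s C) :=
    sep_bound hE (Finset.insert_subset_iff.mpr ⟨hsG, hCG⟩) hG hsepx'
  omega


lemma main_loop (r s : V) (hrs : r ≠ s) :
    ∀ (k : ℕ) (E A : Multiset (V × V)), indeg (E + A) s = k → (∀ a ∈ A, a.2 = r) →
      Eul (E + A) →
      ∃ E' A' : Multiset (V × V), Relation.ReflTransGen (SplitStep s) E E' ∧
        (∀ a ∈ A', a.2 = r) ∧ Eul (E' + A') ∧ indeg (E' + A') s = 0 ∧
        (∀ v, v ≠ r → v ≠ s → lam (E' + A') r v = lam (E + A) r v) := by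
  intro k
  induction k using Nat.strong_induction_on with
  | _ k ih =>
    intro E A hk hA hE
    rcases Nat.eq_zero_or_pos k with rfl | hkpos
    · exact ⟨E, A, Relation.ReflTransGen.refl, hA, hE, hk, fun _ _ _ => rfl⟩
    by_cases hloop : (s, s) ∈ E + A
    · have hloopE : (s, s) ∈ E := by
        rcases Multiset.mem_add.mp hloop with h | h
        · exact h
        · exact absurd (hA _ h) (Ne.symm hrs)
      have hstep : SplitStep s E (E.erase (s, s)) := Or.inl ⟨s, hloopE, rfl⟩
      have hEA : E + A = (s, s) ::ₘ (E.erase (s, s) + A) := by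
        rw [← Multiset.cons_add, Multiset.cons_erase hloopE]
      have hEul' : Eul (E.erase (s, s) + A) := by
        intro x
        have h1 := hE x
        rw [hEA, indeg_cons, outdeg_cons] at h1
        simp at h1
        omega
      have hdin' : ∀ T : Finset V, din (E.erase (s, s) + A) T = din (E + A) T := by
        intro T
        rw [hEA, din_cons]
        by_cases hsT : s ∈ T <;> simp [hsT]
      have hlam' : ∀ v, lam (E.erase (s, s) + A) r v = lam (E + A) r v := by
        intro v
        unfold lam
        congr 1
        ext n
        constructor
        · rintro ⟨T, h1, h2, h3⟩
          exact ⟨T, h1, h2, by rw [← hdin' T]; exact h3⟩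
        · rintro ⟨T, h1, h2, h3⟩
          exact ⟨T, h1, h2, by rw [hdin' T]; exact h3⟩
      have hksub : indeg (E.erase (s, s) + A) s = k - 1 := by
        have h0 := hk
        rw [hEA, indeg_cons] at h0
        simp at h0
        omega
      obtain ⟨E', A', hchain, c2, c3, c4, c5⟩ :=
        ih (k - 1) (by omega) (E.erase (s, s)) A hksub hA hEul'
      exact ⟨E', A', Relation.ReflTransGen.head hstep hchain, c2, c3, c4,
        fun v h1 h2 => (c5 v h1 h2).trans (hlam' v)⟩
    · have hin : 0 < indeg (E + A) s := by omega
      obtain ⟨a, haM, ha2⟩ := countP_pos.mp hin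
      obtain ⟨u0, s'⟩ := a
      rw [show s' = s from ha2] at haM
      clear ha2
      have hu0 : u0 ≠ s := fun h => hloop (h ▸ haM)
      obtain ⟨w, hwM, hgood⟩ := exists_good_split (E + A) hE r s u0 hrs hu0 haM hloop
      have hws : w ≠ s := fun h => hloop (h ▸ hwM)
      have hne2 : ((s, w) : V × V) ≠ (u0, s) := by
        intro h; rw [Prod.mk.injEq] at h; exact hu0 h.1.symm
      have hswE : (s, w) ∈ (E + A).erase (u0, s) := (Multiset.mem_erase_of_ne hne2).mpr hwM
      have hMeq : E + A = (u0, s) ::ₘ (s, w) ::ₘ ((E + A).erase (u0, s)).erase (s, w) := by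
        rw [Multiset.cons_erase hswE, Multiset.cons_erase haM]
      set M' := (u0, w) ::ₘ ((E + A).erase (u0, s)).erase (s, w) with hM'
      have hdle : ∀ T : Finset V, din M' T ≤ din (E + A) T := by
        intro T
        conv_rhs => rw [hMeq]
        rw [hM', din_cons, din_cons, din_cons]
        by_cases g1 : u0 ∈ T <;> by_cases g2 : w ∈ T <;> by_cases g3 : s ∈ T <;>
          simp [g1, g2, g3]
      have hEul' : Eul M' := by
        intro x
        have h1 := hE x
        rw [hMeq, indeg_cons, indeg_cons, outdeg_cons, outdeg_cons] at h1
        rw [hM', indeg_cons, outdeg_cons]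
        simp only [Prod.fst, Prod.snd] at h1 ⊢
        by_cases g1 : u0 = x <;> by_cases g2 : s = x <;> by_cases g3 : w = x <;>
          simp [g1, g2, g3] at h1 ⊢ <;> omega
      have hlam_eq : ∀ v, v ≠ r → v ≠ s → lam M' r v = lam (E + A) r v := by
        intro v hvr hvs
        apply le_antisymm
        · obtain ⟨T, t1, t2, t3⟩ := lam_spec (E + A) hvr
          calc lam M' r v ≤ din M' T := lam_le t1 t2
            _ ≤ din (E + A) T := hdle T
            _ = lam (E + A) r v := t3
        · obtain ⟨T, t1, t2, t3⟩ := lam_spec M' hvr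
          calc lam (E + A) r v ≤ din M' T := hgood v hvs T t1 t2
            _ = lam M' r v := t3
      have hk' : indeg M' s = k - 1 := by
        have h0 := hk
        rw [hMeq, indeg_cons, indeg_cons] at h0
        rw [hM', indeg_cons]
        simp [hws] at h0 ⊢
        omega
      have hu0E : (u0, s) ∈ E := by
        rcases Multiset.mem_add.mp haM with h | h
        · exact h
        · exact absurd (hA _ h) (Ne.symm hrs)
      by_cases hwA : (s, w) ∈ A
      · have hwr : w = r := hA _ hwA
        have hstep : SplitStep s E (E.erase (u0, s)) := Or.inl ⟨u0, hu0E, rfl⟩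
        have hA1 : ∀ a ∈ ((u0, w) ::ₘ A.erase (s, w)), a.2 = r := by
          intro a ha
          rcases Multiset.mem_cons.mp ha with rfl | h
          · exact hwr
          · exact hA _ (Multiset.mem_of_mem_erase h)
        have hE1A1 : E.erase (u0, s) + ((u0, w) ::ₘ A.erase (s, w)) = M' := by
          rw [hM', Multiset.erase_add_left_pos _ hu0E, Multiset.erase_add_right_pos _ hwA,
            Multiset.add_cons]
        obtain ⟨E', A', hchain, c2, c3, c4, c5⟩ :=
          ih (k - 1) (by omega) (E.erase (u0, s)) ((u0, w) ::ₘ A.erase (s, w))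
            (by rw [hE1A1]; exact hk') hA1 (by rw [hE1A1]; exact hEul')
        refine ⟨E', A', Relation.ReflTransGen.head hstep hchain, c2, c3, c4, ?_⟩
        intro v h1 h2
        rw [c5 v h1 h2, hE1A1, hlam_eq v h1 h2]
      · have hwE : (s, w) ∈ E := by
          rcases Multiset.mem_add.mp hwM with h | h
          · exact h
          · exact absurd h hwA
        have hwE' : (s, w) ∈ E.erase (u0, s) := (Multiset.mem_erase_of_ne hne2).mpr hwE
        have hstep : SplitStep s E ((u0, w) ::ₘ (E.erase (u0, s)).erase (s, w)) :=
          Or.inr ⟨u0, w, hu0E, hwE, rfl⟩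
        have hE1A : ((u0, w) ::ₘ (E.erase (u0, s)).erase (s, w)) + A = M' := by
          rw [hM', Multiset.erase_add_left_pos _ hu0E, Multiset.erase_add_left_pos _ hwE',
            Multiset.cons_add]
        obtain ⟨E', A', hchain, c2, c3, c4, c5⟩ :=
          ih (k - 1) (by omega) ((u0, w) ::ₘ (E.erase (u0, s)).erase (s, w)) A
            (by rw [hE1A]; exact hk') hA (by rw [hE1A]; exact hEul')
        refine ⟨E', A', Relation.ReflTransGen.head hstep hchain, c2, c3, c4, ?_⟩
        intro v h1 h2
        rw [c5 v h1 h2, hE1A, hlam_eq v h1 h2]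


end PFS

open PFS in
theorem preflow_splitting_off
    {V : Type*} [DecidableEq V]
    (E : Multiset (V × V)) (r s : V) (hrs : r ≠ s)
    (hpre : ∀ v : V, v ≠ r →
      (E.filter fun a => a.1 = v).card ≤ (E.filter fun a => a.2 = v).card) :
    ∃ E' : Multiset (V × V),
      Relation.ReflTransGen (SplitStep s) E E' ∧
      (∀ a ∈ E', a.1 ≠ s ∧ a.2 ≠ s) ∧
      (∀ v : V, v ≠ r →
        (E'.filter fun a => a.1 = v).card ≤ (E'.filter fun a => a.2 = v).card) ∧
      (∀ v : V, v ≠ s → ∀ n : ℕ, HasDisjPaths E r v n ↔ HasDisjPaths E' r v n) := by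
  classical
  set A0 := ((E.map fun a => (a.2, r)) - (E.map fun a => (a.1, r))).filter
    (fun a => a.1 ≠ r) with hA0def
  have hA0r : ∀ a ∈ A0, a.2 = r := by
    intro a ha
    have h1 := Multiset.mem_filter.mp ha
    have h2 := Multiset.mem_of_le tsub_le_self h1.1
    obtain ⟨b, _, rfl⟩ := Multiset.mem_map.mp h2
    rfl
  have hpre' : ∀ v, v ≠ r → outdeg E v ≤ indeg E v := by
    intro v hv
    have h := hpre v hv
    unfold outdeg indeg
    rw [Multiset.countP_eq_card_filter, Multiset.countP_eq_card_filter]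
    exact h
  have hcount : ∀ v, v ≠ r → A0.count (v, r) = indeg E v - outdeg E v := by
    intro v hv
    rw [hA0def, Multiset.count_filter, if_pos (show ((v, r) : V × V).1 ≠ r from hv),
      Multiset.count_sub]
    congr 1
    · rw [Multiset.count_map, ← Multiset.countP_eq_card_filter]
      unfold indeg
      apply Multiset.countP_congr rfl
      intro a _
      apply propext
      constructor
      · intro h
        exact (Prod.ext_iff.mp h).1.symm
      · intro h
        rw [h]
    · rw [Multiset.count_map, ← Multiset.countP_eq_card_filter]
      unfold outdeg
      apply Multiset.countP_congr rfl
      intro a _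
      apply propext
      constructor
      · intro h
        exact (Prod.ext_iff.mp h).1.symm
      · intro h
        rw [h]
  have hioA0 : ∀ x, x ≠ r → indeg A0 x = 0 := by
    intro x hx
    unfold indeg
    rw [Multiset.countP_eq_zero]
    intro a ha h
    exact hx (h ▸ hA0r a ha)
  have houtA0 : ∀ x, outdeg A0 x = A0.count (x, r) := by
    intro x
    show A0.countP (fun a => a.1 = x) = A0.countP (((x, r) : V × V) = ·)
    apply Multiset.countP_congr rfl
    intro a ha
    apply propext
    constructor
    · intro h
      exact (Prod.ext_iff.mpr ⟨h.symm, (hA0r a ha).symm⟩)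
    · intro h
      exact (Prod.ext_iff.mp h).1.symm
  have houtA0r : outdeg A0 r = 0 := by
    unfold outdeg
    rw [Multiset.countP_eq_zero]
    intro a ha h
    exact (Multiset.mem_filter.mp ha).2 h
  have hbal_ne : ∀ x, x ≠ r → indeg (E + A0) x = outdeg (E + A0) x := by
    intro x hx
    rw [indeg_add, outdeg_add, hioA0 x hx, houtA0 x, hcount x hx]
    have := hpre' x hx
    omega
  have hEul : Eul (E + A0) := by
    intro x
    by_cases hx : x = r
    · rw [hx]
      set S : Finset V := (E.toFinset.image Prod.fst ∪ E.toFinset.image Prod.snd) ∪ {r}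
        with hSdef
      have hSsnd : ∀ a ∈ E + A0, a.2 ∈ S := by
        intro a ha
        rcases Multiset.mem_add.mp ha with h | h
        · exact Finset.mem_union_left _ (Finset.mem_union_right _
            (Finset.mem_image.mpr ⟨a, Multiset.mem_toFinset.mpr h, rfl⟩))
        · rw [hA0r a h]
          exact Finset.mem_union_right _ (by simp)
      have hSfst : ∀ a ∈ E + A0, a.1 ∈ S := by
        intro a ha
        rcases Multiset.mem_add.mp ha with h | h
        · exact Finset.mem_union_left _ (Finset.mem_union_left _
            (Finset.mem_image.mpr ⟨a, Multiset.mem_toFinset.mpr h, rfl⟩))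
        · have h1 := Multiset.mem_filter.mp h
          have h2 := Multiset.mem_of_le tsub_le_self h1.1
          obtain ⟨b, hb, rfl⟩ := Multiset.mem_map.mp h2
          exact Finset.mem_union_left _ (Finset.mem_union_right _
            (Finset.mem_image.mpr ⟨b, Multiset.mem_toFinset.mpr hb, rfl⟩))
      have hsum_in : ∑ x ∈ S, indeg (E + A0) x = Multiset.card (E + A0) := by
        rw [sum_indeg]
        exact Multiset.countP_eq_card.mpr hSsnd
      have hsum_out : ∑ x ∈ S, outdeg (E + A0) x = Multiset.card (E + A0) := by
        rw [sum_outdeg]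
        exact Multiset.countP_eq_card.mpr hSfst
      have hrS : r ∈ S := Finset.mem_union_right _ (by simp)
      have h1 := Finset.sum_erase_add S (fun x => indeg (E + A0) x) hrS
      have h2 := Finset.sum_erase_add S (fun x => outdeg (E + A0) x) hrS
      beta_reduce at h1 h2
      have h3 : ∑ x ∈ S.erase r, indeg (E + A0) x = ∑ x ∈ S.erase r, outdeg (E + A0) x :=
        Finset.sum_congr rfl (fun x hxS => hbal_ne x (Finset.ne_of_mem_erase hxS))
      omega
    · exact hbal_ne x hx
  have hdinA0 : ∀ T : Finset V, r ∉ T → din (E + A0) T = din E T := by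
    intro T hrT
    rw [din_add]
    have : din A0 T = 0 := by
      rw [din, Multiset.countP_eq_zero]
      rintro a ha ⟨_, h2⟩
      exact hrT ((hA0r a ha) ▸ h2)
    omega
  obtain ⟨E', A', hchain, hA'r, hEul', hs0, hlameq⟩ :=
    main_loop r s hrs (indeg (E + A0) s) E A0 rfl hA0r hEul
  have hout0 : outdeg (E' + A') s = 0 := by
    have := hEul' s
    omega
  have hdinA' : ∀ T : Finset V, r ∉ T → din (E' + A') T = din E' T := by
    intro T hrT
    rw [din_add]
    have : din A' T = 0 := by
      rw [din, Multiset.countP_eq_zero]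
      rintro a ha ⟨_, h2⟩
      exact hrT ((hA'r a ha) ▸ h2)
    omega
  refine ⟨E', hchain, ?_, ?_, ?_⟩
  · intro a ha
    constructor
    · intro h
      have : 0 < outdeg (E' + A') s :=
        Multiset.countP_pos.mpr ⟨a, Multiset.mem_add.mpr (Or.inl ha), h⟩
      omega
    · intro h
      have : 0 < indeg (E' + A') s :=
        Multiset.countP_pos.mpr ⟨a, Multiset.mem_add.mpr (Or.inl ha), h⟩
      omega
  · intro v hv
    have h1 := hEul' v
    have h2 : indeg A' v = 0 := by
      unfold indeg
      rw [Multiset.countP_eq_zero]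
      intro a ha h
      exact hv (h ▸ hA'r a ha)
    have h3 := indeg_add E' A' v
    have h4 := outdeg_add E' A' v
    have hgoal : outdeg E' v ≤ indeg E' v := by omega
    unfold outdeg indeg at hgoal
    rw [Multiset.countP_eq_card_filter, Multiset.countP_eq_card_filter] at hgoal
    exact hgoal
  · intro v hvs n
    by_cases hvr : v = r
    · subst hvr
      constructor
      · intro _
        exact hasDisjPaths_self E' v n
      · intro _
        exact hasDisjPaths_self E v n
    · rw [menger E r v hvr n, menger E' r v hvr n]
      constructor
      · intro h T hvT hrT
        calc n ≤ lam (E' + A') r v := by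
              rw [hlameq v hvr hvs]
              obtain ⟨T0, t1, t2, t3⟩ := lam_spec (E + A0) hvr
              rw [← t3]
              rw [hdinA0 T0 t2]
              exact h T0 t1 t2
          _ ≤ din (E' + A') T := lam_le hvT hrT
          _ = din E' T := hdinA' T hrT
      · intro h T hvT hrT
        calc n ≤ lam (E + A0) r v := by
              rw [← hlameq v hvr hvs]
              obtain ⟨T0, t1, t2, t3⟩ := lam_spec (E' + A') hvr
              rw [← t3]
              rw [hdinA' T0 t2]
              exact h T0 t1 t2
          _ ≤ din (E + A0) T := lam_le hvT hrT
          _ = din E T := hdinA0 T hrT
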